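/- For every real q>1, every n≥1 and every x∈[0,∞), the third central moment of the q-Szász operator is M_{n,q}((t−x)^3;x) = x/[n]_q^2 + (q−1)x^2/[n]_q. -/

import Mathlib

open scoped BigOperators

/-- The `q`-integer `[k]_q = (q^k - 1)/(q - 1)`. -/
noncomputable def qNat (q : ℝ) (k : ℕ) : ℝ := (q ^ k - 1) / (q - 1)

/-- The `q`-factorial `[k]_q! = [1]_q [2]_q ⋯ [k]_q`, with `[0]_q! = 1`. -/
noncomputable def qFactorial (q : ℝ) : ℕ → ℝ
  | 0 => 1
  | k + 1 => qFactorial q k * qNat q (k + 1)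

/-- The `q`-exponential function `e_q(z) = ∑_{k=0}^∞ z^k/[k]_q!`. -/
noncomputable def qExp (q z : ℝ) : ℝ := ∑' k : ℕ, z ^ k / qFactorial q k

/-- The `q`-Szász basis function
`s_{n,k}(q;x) = q^{-k(k-1)/2} ([n]_q^k x^k/[k]_q!) e_q(-[n]_q q^{-k} x)`. -/
noncomputable def qSzaszBasis (q : ℝ) (n k : ℕ) (x : ℝ) : ℝ :=
  (q ^ (k * (k - 1) / 2))⁻¹ * (qNat q n ^ k * x ^ k / qFactorial q k) *
    qExp q (-(qNat q n) * q ^ (-(k : ℤ)) * x)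

/-- The `q`-Szász operator `M_{n,q}(f;x) = ∑_{k=0}^∞ f([k]_q/[n]_q) s_{n,k}(q;x)`. -/
noncomputable def qSzasz (q : ℝ) (n : ℕ) (f : ℝ → ℝ) (x : ℝ) : ℝ :=
  ∑' k : ℕ, f (qNat q k / qNat q n) * qSzaszBasis q n k x

/-- The weight `w_0(x) = 1`, `w_p(x) = (1 + x^p)⁻¹` for `p ≥ 1`. -/
noncomputable def weight (p : ℕ) (x : ℝ) : ℝ := if p = 0 then 1 else (1 + x ^ p)⁻¹

/-- The weighted sup-norm `‖f‖_p = sup_{x ≥ 0} w_p(x)|f(x)|`. -/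
noncomputable def wnorm (p : ℕ) (f : ℝ → ℝ) : ℝ :=
  ⨆ x : Set.Ici (0 : ℝ), weight p x.1 * |f x.1|

/-- Membership in the space `C_p`: `f` is continuous on `[0,∞)` and `w_p f` is
uniformly continuous and bounded on `[0,∞)`. -/
def MemCp (p : ℕ) (f : ℝ → ℝ) : Prop :=
  ContinuousOn f (Set.Ici 0) ∧
  UniformContinuousOn (fun x => weight p x * f x) (Set.Ici 0) ∧
  ∃ M : ℝ, ∀ x ∈ Set.Ici (0 : ℝ), |weight p x * f x| ≤ M

/-- The second difference `Δ_h² f(x) = f(x+2h) - 2f(x+h) + f(x)`. -/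
noncomputable def delta2 (f : ℝ → ℝ) (h x : ℝ) : ℝ := f (x + 2 * h) - 2 * f (x + h) + f x

/-- The second modulus of smoothness `ω_p²(f;δ) = sup_{0<h≤δ} ‖Δ_h² f‖_p`. -/
noncomputable def omega2 (p : ℕ) (f : ℝ → ℝ) (δ : ℝ) : ℝ :=
  ⨆ h : {h : ℝ // 0 < h ∧ h ≤ δ}, wnorm p (fun x => delta2 f h.1 x)

/-- The (first) modulus of continuity on `[0,∞)`:
`ω(g;δ) = sup {|g(s)-g(t)| : s,t ≥ 0, |s-t| ≤ δ}`. -/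
noncomputable def omega1 (g : ℝ → ℝ) (δ : ℝ) : ℝ :=
  sSup {d : ℝ | ∃ s t : ℝ, 0 ≤ s ∧ 0 ≤ t ∧ |s - t| ≤ δ ∧ d = |g s - g t|}

/-- The `q`-derivative `(D_q g)(x) = (g(qx) - g(x))/((q-1)x)`. -/
noncomputable def qDeriv (q : ℝ) (g : ℝ → ℝ) (x : ℝ) : ℝ := (g (q * x) - g x) / ((q - 1) * x)

/-- The `q`-Stirling-type numbers: `S_q(0,0)=1`, `S_q(m,0)=0` for `m>0`,
`S_q(m,j)=0` for `m<j`, and `S_q(m+1,j)=[j]_q S_q(m,j) + S_q(m,j-1)`. -/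
noncomputable def qStirling (q : ℝ) : ℕ → ℕ → ℝ
  | 0, 0 => 1
  | 0, _ + 1 => 0
  | _ + 1, 0 => 0
  | m + 1, j + 1 => qNat q (j + 1) * qStirling q m (j + 1) + qStirling q m j

section Aux
open Finset

lemma tsum_antidiag {T : ℕ × ℕ → ℝ} (hT : Summable T) :
    ∑' p : ℕ × ℕ, T p = ∑' m : ℕ, ∑ kl ∈ Finset.HasAntidiagonal.antidiagonal m, T kl := by
  have hs : Summable (T ∘ Finset.HasAntidiagonal.sigmaAntidiagonalEquivProd) :=
    Finset.HasAntidiagonal.sigmaAntidiagonalEquivProd.summable_iff.mpr hT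
  refine (Finset.HasAntidiagonal.sigmaAntidiagonalEquivProd.tsum_eq T).symm.trans ?_
  refine (Summable.tsum_sigma' (fun m => (hasSum_fintype _).summable) hs).trans ?_
  exact tsum_congr fun m => by
    rw [tsum_fintype]
    exact Finset.sum_coe_sort (Finset.HasAntidiagonal.antidiagonal m) T

section basic
variable {q : ℝ} (hq : 1 < q)
include hq

lemma one_lt_pow_q {k : ℕ} (hk : 1 ≤ k) : 1 < q ^ k :=
  one_lt_pow₀ hq (by omega)

lemma qNat_pos {k : ℕ} (hk : 1 ≤ k) : 0 < qNat q k :=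
  div_pos (by linarith [one_lt_pow_q hq hk]) (by linarith)

lemma qNat_nonneg (k : ℕ) : 0 ≤ qNat q k := by
  cases k with
  | zero => simp [qNat]
  | succ k => exact (qNat_pos hq (Nat.succ_le_succ (Nat.zero_le k))).le

lemma qFactorial_pos (k : ℕ) : 0 < qFactorial q k := by
  induction k with
  | zero => norm_num [qFactorial]
  | succ k ih => exact mul_pos ih (qNat_pos hq (by omega))

lemma qNat_le (k : ℕ) : qNat q k ≤ q ^ k / (q - 1) := by
  apply div_le_div_of_nonneg_right ?_ (by linarith)
  · linarith

lemma qNat_ge {k : ℕ} (hk : 1 ≤ k) : q ^ (k - 1) ≤ qNat q k := by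
  rw [qNat, le_div_iff₀ (by linarith)]
  have : q ^ k = q ^ (k-1) * q := by
    rw [← pow_succ]; congr 1; omega
  nlinarith [one_le_pow₀ hq.le (n := k - 1)]

omit hq in
lemma even_ksub (k : ℕ) : k * (k-1) / 2 + k * (k-1) / 2 = k * (k - 1) := by
  have : Even (k * (k-1)) := by
    cases k with
    | zero => simp
    | succ k => simpa [Nat.mul_comm] using Nat.even_mul_succ_self k
  obtain ⟨t, ht⟩ := this
  omega

omit hq in
lemma choose2_succ (k : ℕ) : (k+1) * ((k+1) - 1) / 2 = k * (k-1)/2 + k := by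
  have e1 := even_ksub k
  have e2 := even_ksub (k+1)
  have h3 : (k+1) * ((k+1) - 1) = k * (k-1) + 2 * k := by
    simp only [Nat.add_sub_cancel]
    cases k with
    | zero => simp
    | succ k => simp only [Nat.succ_sub_one]; ring
  omega

lemma qFactorial_ge (k : ℕ) : q ^ (k * (k-1) / 2) ≤ qFactorial q k := by
  induction k with
  | zero => simp [qFactorial]
  | succ k ih =>
    have h1 : q ^ k ≤ qNat q (k+1) := by simpa using qNat_ge hq (k := k+1) (by omega)
    have h2 := choose2_succ k
    rw [qFactorial, h2, pow_add]
    have := pow_pos (by linarith : (0:ℝ) < q) (k*(k-1)/2)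
    have := pow_pos (by linarith : (0:ℝ) < q) k
    nlinarith

lemma summable_qExpSeries (z : ℝ) : Summable (fun j => z ^ j / qFactorial q j) := by
  apply summable_of_ratio_norm_eventually_le (r := 1/2) (by norm_num)
  have htend : Filter.Tendsto (fun j : ℕ => q ^ j) Filter.atTop Filter.atTop :=
    tendsto_pow_atTop_atTop_of_one_lt hq
  filter_upwards [htend.eventually_ge_atTop (2 * |z|)] with j hj
  have hfp := qFactorial_pos hq j
  have hfp' := qFactorial_pos hq (j+1)
  have hN : q ^ j ≤ qNat q (j+1) := by simpa using qNat_ge hq (k := j+1) (by omega)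
  have hzj : |z| ≤ qNat q (j+1) / 2 := by
    rw [le_div_iff₀ (by norm_num)]; nlinarith
  rw [qFactorial]
  rw [norm_div, norm_div, Real.norm_eq_abs, Real.norm_eq_abs, Real.norm_eq_abs,
    Real.norm_eq_abs, abs_of_pos hfp, abs_of_pos (mul_pos hfp (qNat_pos hq (by omega)))]
  rw [div_le_iff₀ (mul_pos hfp (qNat_pos hq (by omega)))]
  have : |z ^ (j+1)| = |z| * |z ^ j| := by rw [pow_succ, abs_mul, mul_comm]
  rw [this]
  have h0 : 0 ≤ |z ^ j| / qFactorial q j := by positivity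
  have : |z| * |z ^ j| ≤ (qNat q (j+1) / 2) * |z ^ j| :=
    mul_le_mul_of_nonneg_right hzj (abs_nonneg _)
  calc |z| * |z ^ j| ≤ (qNat q (j+1) / 2) * |z ^ j| := this
    _ = 1/2 * (|z ^ j| / qFactorial q j) * (qFactorial q j * qNat q (j+1)) := by
        field_simp

omit hq in
lemma qNat_add (ha : q ≠ 1) (a b : ℕ) : qNat q (a+b) = qNat q a + q ^ a * qNat q b := by
  rw [qNat, qNat, qNat, pow_add]
  have : q - 1 ≠ 0 := sub_ne_zero.mpr ha
  field_simp
  ring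

lemma gauss (m : ℕ) (z : ℝ) :
    ∑ k ∈ range (m+1), q ^ (k*(k-1)/2) * z^k / (qFactorial q k * qFactorial q (m-k))
      = (∏ l ∈ range m, (1 + q^l * z)) / qFactorial q m := by
  induction m with
  | zero => simp [qFactorial]
  | succ m ih =>
    have hq1 : q ≠ 1 := hq.ne'
    have hNpos := qNat_pos hq (show 1 ≤ m+1 by omega)
    have hstep : ∀ k ∈ range (m+2),
        q ^ (k*(k-1)/2) * z^k / (qFactorial q k * qFactorial q (m+1-k))
        = q ^ (k*(k-1)/2) * z^k * qNat q (m+1-k) /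
            (qFactorial q k * qFactorial q (m+1-k) * qNat q (m+1))
          + q ^ (k*(k-1)/2) * q^(m+1-k) * z^k * qNat q k /
            (qFactorial q k * qFactorial q (m+1-k) * qNat q (m+1)) := by
      intro k hk
      rw [mem_range] at hk
      have hsplit : qNat q (m+1) = qNat q (m+1-k) + q^(m+1-k) * qNat q k := by
        conv_lhs => rw [show m+1 = (m+1-k) + k from by omega]
        exact qNat_add hq1 _ _
      rw [← add_div]
      have hnum : q ^ (k*(k-1)/2) * z^k * qNat q (m+1-k)
          + q ^ (k*(k-1)/2) * q^(m+1-k) * z^k * qNat q k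
          = q ^ (k*(k-1)/2) * z^k * qNat q (m+1) := by
        rw [hsplit]; ring
      rw [hnum]
      have h1 := (qFactorial_pos hq k).ne'
      have h2 := (qFactorial_pos hq (m+1-k)).ne'
      field_simp
    rw [Finset.sum_congr rfl hstep, Finset.sum_add_distrib]
    have hb : ∑ k ∈ range (m+2), q ^ (k*(k-1)/2) * z^k * qNat q (m+1-k) /
          (qFactorial q k * qFactorial q (m+1-k) * qNat q (m+1))
        = (∑ k ∈ range (m+1), q ^ (k*(k-1)/2) * z^k / (qFactorial q k * qFactorial q (m-k)))
            / qNat q (m+1) := by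
      rw [Finset.sum_range_succ, show m+1-(m+1) = 0 from by omega]
      have h0 : qNat q 0 = 0 := by simp [qNat]
      rw [h0, mul_zero, zero_div, add_zero, Finset.sum_div]
      apply Finset.sum_congr rfl
      intro k hk
      rw [mem_range] at hk
      have hfe : qFactorial q (m+1-k) = qFactorial q (m-k) * qNat q (m+1-k) := by
        rw [show m+1-k = (m-k)+1 from by omega, qFactorial]
      rw [hfe]
      have h1 := (qFactorial_pos hq k).ne'
      have h2 := (qFactorial_pos hq (m-k)).ne'
      have h3 := (qNat_pos hq (show 1 ≤ m+1-k by omega)).ne'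
      field_simp
      try ring
    have hc : ∑ k ∈ range (m+2), q ^ (k*(k-1)/2) * q^(m+1-k) * z^k * qNat q k /
          (qFactorial q k * qFactorial q (m+1-k) * qNat q (m+1))
        = q^m * z * (∑ k ∈ range (m+1), q ^ (k*(k-1)/2) * z^k /
            (qFactorial q k * qFactorial q (m-k))) / qNat q (m+1) := by
      rw [Finset.sum_range_succ']
      have h0 : qNat q 0 = 0 := by simp [qNat]
      rw [h0]
      simp only [mul_zero, zero_div, add_zero]
      rw [Finset.mul_sum, Finset.sum_div]
      apply Finset.sum_congr rfl
      intro k hk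
      rw [mem_range] at hk
      have hc2 := choose2_succ k
      have hfe : qFactorial q (k+1) = qFactorial q k * qNat q (k+1) := rfl
      have hsub : m+1-(k+1) = m-k := by omega
      rw [hc2, hsub, hfe]
      have hpow : q ^ (k*(k-1)/2 + k) * q ^ (m-k) = q ^ (k*(k-1)/2) * q ^ m := by
        rw [pow_add, mul_assoc, ← pow_add, show k + (m-k) = m from by omega]
      have h1 := (qFactorial_pos hq k).ne'
      have h2 := (qFactorial_pos hq (m-k)).ne'
      have h3 := (qNat_pos hq (show 1 ≤ k+1 by omega)).ne'
      field_simp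
      linear_combination (z * z^k) * hpow
    rw [hb, hc, ih, Finset.prod_range_succ]
    have h1 := (qFactorial_pos hq m).ne'
    have hfe : qFactorial q (m+1) = qFactorial q m * qNat q (m+1) := rfl
    rw [hfe]
    field_simp
    ring


end basic

noncomputable def Ssum (q : ℝ) (i m : ℕ) : ℝ :=
  ∑ k ∈ Finset.range (m+1), (q^k)^i * (-1:ℝ)^k * (q ^ (k*(k-1)/2))⁻¹ * ((q^k)⁻¹)^(m-k) /
    (qFactorial q k * qFactorial q (m-k))

section basic2
variable {q : ℝ} (hq : 1 < q)
include hq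

lemma S_eq (i m : ℕ) :
    Ssum q i m
      = (∏ l ∈ range m, (1 + q^l * (-(q^(i+1)) / q^m))) / qFactorial q m := by
  rw [Ssum, ← gauss hq]
  apply Finset.sum_congr rfl
  intro k hk
  rw [mem_range] at hk
  obtain ⟨d, rfl⟩ : ∃ d, m = k + d := ⟨m - k, by omega⟩
  rw [Nat.add_sub_cancel_left]
  congr 1
  have hq0 : (q:ℝ) ≠ 0 := by positivity
  have hnat : k*(k-1)/2 + (i+1)*k + (k*(k-1)/2 + k*d) = k*i + (k+d)*k := by
    have e := even_ksub k
    cases k with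
    | zero => simp
    | succ k =>
      simp only [Nat.succ_sub_one] at e ⊢
      zify at e ⊢
      linear_combination e
  have key : (q:ℝ) ^ (k*(k-1)/2) * q^((i+1)*k) * (q^((k+d)*k))⁻¹
      = q^(k*i) * (q ^ (k*(k-1)/2))⁻¹ * (q^(k*d))⁻¹ := by
    have h1 : (q:ℝ)^((k+d)*k) ≠ 0 := by positivity
    have h2 : (q:ℝ)^(k*(k-1)/2) ≠ 0 := by positivity
    have h3 : (q:ℝ)^(k*d) ≠ 0 := by positivity
    field_simp
    rw [← pow_mul, ← pow_add, ← pow_add, ← pow_add]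
    congr 1
    linarith [hnat]
  have hnum : (q:ℝ) ^ (k*(k-1)/2) * (-(q^(i+1)) / q^(k+d))^k
      = (q^k)^i * (-1:ℝ)^k * (q ^ (k*(k-1)/2))⁻¹ * ((q^k)⁻¹)^d := by
    conv_lhs => rw [neg_div, neg_pow, div_pow, ← pow_mul, ← pow_mul, div_eq_mul_inv]
    conv_rhs => rw [← pow_mul, inv_pow, ← pow_mul]
    linear_combination ((-1:ℝ)^k) * key
  exact hnum.symm

lemma S_vanish {i m : ℕ} (him : i < m) : Ssum q i m = 0 := by
  rw [S_eq hq]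
  have hq0 : (q:ℝ) ≠ 0 := by positivity
  have hzero : (1:ℝ) + q^(m-1-i) * (-(q^(i+1)) / q^m) = 0 := by
    have hp : (q:ℝ)^(m-1-i) * q^(i+1) = q^m := by
      rw [← pow_add]; congr 1; omega
    have hne : (q:ℝ)^m ≠ 0 := by positivity
    have h4 : (q:ℝ)^(m-1-i) * (-(q^(i+1)) / q^m) = -((q^(m-1-i) * q^(i+1)) / q^m) := by ring
    rw [h4, hp, div_self hne]
    ring
  rw [Finset.prod_eq_zero (Finset.mem_range.mpr (show m-1-i < m by omega)) hzero, zero_div]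

end basic2

section main
variable {q : ℝ} (hq : 1 < q)
include hq

set_option maxHeartbeats 2000000 in
lemma T_term {N x : ℝ} (hN : 0 < N) (m k : ℕ) (hk : k ≤ m) :
    ((qNat q k / N - x)^3 * ((q ^ (k*(k-1)/2))⁻¹ * (N ^ k * x ^ k / qFactorial q k)))
      * ((-N * q ^ (-(k:ℤ)) * x) ^ (m-k) / qFactorial q (m-k))
    = ((-1)^m * (N*x)^m / ((q-1)*N)^3) *
      ( ((q^k)^3 * (-1:ℝ)^k * (q ^ (k*(k-1)/2))⁻¹ * ((q^k)⁻¹)^(m-k) /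
          (qFactorial q k * qFactorial q (m-k)))
        - 3*(1+(q-1)*N*x) * ((q^k)^2 * (-1:ℝ)^k * (q ^ (k*(k-1)/2))⁻¹ * ((q^k)⁻¹)^(m-k) /
          (qFactorial q k * qFactorial q (m-k)))
        + 3*(1+(q-1)*N*x)^2 * ((q^k)^1 * (-1:ℝ)^k * (q ^ (k*(k-1)/2))⁻¹ * ((q^k)⁻¹)^(m-k) /
          (qFactorial q k * qFactorial q (m-k)))
        - (1+(q-1)*N*x)^3 * ((q^k)^0 * (-1:ℝ)^k * (q ^ (k*(k-1)/2))⁻¹ * ((q^k)⁻¹)^(m-k) /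
          (qFactorial q k * qFactorial q (m-k))) ) := by
  have hq0 : (0:ℝ) < q := by linarith
  have hzp : (q:ℝ) ^ (-(k:ℤ)) = ((q:ℝ)^k)⁻¹ := by
    rw [zpow_neg, zpow_natCast]
  rw [hzp, qNat]
  obtain ⟨d, rfl⟩ : ∃ d, m = k + d := ⟨m-k, by omega⟩
  rw [Nat.add_sub_cancel_left]
  have e1 : ((-1:ℝ))^(k+d) = (-1)^k * (-1)^d := pow_add _ _ _
  have e2 : (N*x)^(k+d) = (N^k * x^k) * (N^d * x^d) := by rw [pow_add]; ring
  have e3 : (-N * ((q:ℝ)^k)⁻¹ * x)^d = (-1)^d * N^d * (((q:ℝ)^k)⁻¹)^d * x^d := by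
    rw [show -N * ((q:ℝ)^k)⁻¹ * x = (-1) * (N * ((q:ℝ)^k)⁻¹ * x) from by ring, mul_pow,
      mul_pow, mul_pow]
    ring
  rw [e1, e2, e3]
  have h1 : ((q:ℝ) - 1) ≠ 0 := by linarith
  have h2 : N ≠ 0 := hN.ne'
  have h3 : ((q:ℝ)^k) ≠ 0 := by positivity
  have h4 : ((q:ℝ) ^ (k*(k-1)/2)) ≠ 0 := by positivity
  have h5 := (qFactorial_pos hq k).ne'
  have h6 := (qFactorial_pos hq d).ne'
  rcases Nat.even_or_odd k with hpar | hpar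
  · simp only [hpar.neg_one_pow]
    field_simp
    ring
  · simp only [hpar.neg_one_pow]
    field_simp
    ring

lemma summable_ratio {r : ℝ} (hr : 0 ≤ r) :
    Summable (fun k : ℕ => r^k * ((q:ℝ)^(k*(k-1)))⁻¹) := by
  have hq0 : (0:ℝ) < q := by linarith
  apply summable_of_ratio_norm_eventually_le (r := 1/2) (by norm_num)
  have h2 : (1:ℝ) < q^2 := by nlinarith
  have htend := tendsto_pow_atTop_atTop_of_one_lt h2
  filter_upwards [htend.eventually_ge_atTop (2*r)] with k hk
  rw [Real.norm_eq_abs, Real.norm_eq_abs, abs_of_nonneg (by positivity),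
    abs_of_nonneg (by positivity)]
  have hsplit : (q:ℝ)^((k+1)*((k+1)-1)) = q^(k*(k-1)) * (q^2)^k := by
    rw [← pow_mul, ← pow_add]
    congr 1
    cases k with
    | zero => simp
    | succ k => simp only [Nat.succ_sub_one, Nat.add_sub_cancel]; ring
  rw [hsplit, pow_succ, mul_inv]
  have hp : (0:ℝ) < (q^2)^k := by positivity
  have hk2 : r * ((q^2)^k)⁻¹ ≤ 1/2 := by
    rw [mul_inv_le_iff₀ hp]
    nlinarith
  calc r^k * r * ((q^(k*(k-1)))⁻¹ * ((q^2)^k)⁻¹)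
      = (r * ((q^2)^k)⁻¹) * (r^k * (q^(k*(k-1)))⁻¹) := by ring
    _ ≤ 1/2 * (r^k * (q^(k*(k-1)))⁻¹) :=
        mul_le_mul_of_nonneg_right hk2 (by positivity)

lemma summable_main {N x : ℝ} (hN : 0 < N) (hx : 0 ≤ x) :
    Summable (fun p : ℕ × ℕ =>
      ((qNat q p.1 / N - x)^3 * ((q ^ (p.1*(p.1-1)/2))⁻¹ *
          (N ^ p.1 * x ^ p.1 / qFactorial q p.1)))
      * ((-N * q ^ (-(p.1:ℤ)) * x) ^ p.2 / qFactorial q p.2)) := by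
  have hq0 : (0:ℝ) < q := by linarith
  set B : ℝ := ((q-1)*N)⁻¹ + x with hB
  have hBpos : 0 < B := by
    have h : (0:ℝ) < ((q-1)*N)⁻¹ := by
      apply inv_pos.mpr; apply mul_pos (by linarith) hN
    rw [hB]; linarith
  have hU : Summable (fun k : ℕ => B^3 * ((q^3*(N*x))^k * ((q:ℝ)^(k*(k-1)))⁻¹)) :=
    (summable_ratio hq (by positivity)).mul_left _
  have hV : Summable (fun j : ℕ => (N*x)^j / qFactorial q j) := summable_qExpSeries hq _
  have hUn : 0 ≤ (fun k : ℕ => B^3 * ((q^3*(N*x))^k * ((q:ℝ)^(k*(k-1)))⁻¹)) := by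
    intro k; positivity
  have hVn : 0 ≤ (fun j : ℕ => (N*x)^j / qFactorial q j) := by
    intro j
    have := qFactorial_pos hq j
    positivity
  apply Summable.of_norm_bounded (hU.mul_of_nonneg hV hUn hVn)
  rintro ⟨k, j⟩
  simp only [Real.norm_eq_abs]
  rw [abs_mul]
  have hF1 := qFactorial_pos hq k
  have hF2 := qFactorial_pos hq j
  have hC2 : (0:ℝ) < q ^ (k*(k-1)/2) := by positivity
  -- bound first factor
  have hqNn := qNat_nonneg hq k
  have hb1 : |qNat q k / N - x| ≤ q^k * B := by
    have h1 : |qNat q k / N - x| ≤ qNat q k / N + x := by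
      refine (abs_sub _ _).trans ?_
      rw [abs_of_nonneg (by positivity : (0:ℝ) ≤ qNat q k / N), abs_of_nonneg hx]
    have h2 : qNat q k / N ≤ q^k * ((q-1)*N)⁻¹ := by
      calc qNat q k / N ≤ (q^k/(q-1))/N :=
            div_le_div_of_nonneg_right (qNat_le hq k) hN.le
        _ = q^k * ((q-1)*N)⁻¹ := by rw [div_div, div_eq_mul_inv]
    have h3 : x ≤ q^k * x := by
      nlinarith [one_le_pow₀ hq.le (n := k)]
    rw [hB]
    calc |qNat q k / N - x| ≤ qNat q k / N + x := h1
      _ ≤ q^k * ((q-1)*N)⁻¹ + q^k * x := by linarith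
      _ = q^k * (((q-1)*N)⁻¹ + x) := by ring
  have habs1 : |(qNat q k / N - x)^3 * ((q ^ (k*(k-1)/2))⁻¹ * (N^k * x^k / qFactorial q k))|
      ≤ B^3 * ((q^3*(N*x))^k * ((q:ℝ)^(k*(k-1)))⁻¹) := by
    rw [abs_mul, abs_pow]
    have t1 : |qNat q k / N - x|^3 ≤ (q^k*B)^3 :=
      pow_le_pow_left₀ (abs_nonneg _) hb1 3
    have hge := qFactorial_ge hq k
    have t2 : |(q ^ (k*(k-1)/2))⁻¹ * (N^k * x^k / qFactorial q k)|
        ≤ (q ^ (k*(k-1)/2))⁻¹ * ((N^k * x^k) * (q ^ (k*(k-1)/2))⁻¹) := by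
      rw [abs_of_nonneg (by positivity)]
      apply mul_le_mul_of_nonneg_left ?_ (by positivity)
      rw [div_eq_mul_inv]
      exact mul_le_mul_of_nonneg_left (inv_anti₀ hC2 hge) (by positivity)
    calc |qNat q k / N - x|^3 * |(q ^ (k*(k-1)/2))⁻¹ * (N^k * x^k / qFactorial q k)|
        ≤ (q^k*B)^3 * ((q ^ (k*(k-1)/2))⁻¹ * ((N^k * x^k) * (q ^ (k*(k-1)/2))⁻¹)) := by
          apply mul_le_mul t1 t2 (abs_nonneg _) (by positivity)
      _ = B^3 * ((q^3*(N*x))^k * (((q:ℝ)^(k*(k-1)/2))⁻¹ * ((q:ℝ)^(k*(k-1)/2))⁻¹)) := by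
          rw [mul_pow, mul_pow, ← pow_mul, ← pow_mul, mul_comm 3 k]
          ring
      _ = B^3 * ((q^3*(N*x))^k * ((q:ℝ)^(k*(k-1)))⁻¹) := by
          rw [← mul_inv, ← pow_add, even_ksub]
  have habs2 : |(-N * q^(-(k:ℤ)) * x)^j / qFactorial q j| ≤ (N*x)^j / qFactorial q j := by
    rw [abs_div, abs_of_pos hF2, abs_pow]
    apply div_le_div_of_nonneg_right ?_ hF2.le
    apply pow_le_pow_left₀ (abs_nonneg _) ?_ j
    have hz : (0:ℝ) < q^(-(k:ℤ)) := zpow_pos hq0 _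
    have hz1 : (q:ℝ)^(-(k:ℤ)) ≤ 1 := by
      apply zpow_le_one_of_nonpos₀ hq.le
      omega
    rw [abs_mul, abs_mul, abs_neg, abs_of_pos hN, abs_of_pos hz, abs_of_nonneg hx]
    nlinarith [mul_nonneg (mul_nonneg hN.le hx) (sub_nonneg.mpr hz1)]
  calc |(qNat q k / N - x)^3 * ((q ^ (k*(k-1)/2))⁻¹ * (N^k * x^k / qFactorial q k))|
        * |(-N * q^(-(k:ℤ)) * x)^j / qFactorial q j|
      ≤ (B^3 * ((q^3*(N*x))^k * ((q:ℝ)^(k*(k-1)))⁻¹)) * ((N*x)^j / qFactorial q j) := by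
        apply mul_le_mul habs1 habs2 (abs_nonneg _) (by positivity)
    _ = _ := rfl

end main


end Aux

set_option maxHeartbeats 4000000 in
/-- third central moment
`M_{n,q}((t-x)³;x) = x/[n]_q² + (q-1)x²/[n]_q`. -/
theorem qSzasz_central_moment_three (q : ℝ) (hq : 1 < q) (n : ℕ) (hn : 1 ≤ n)
    (x : ℝ) (hx : 0 ≤ x) :
    qSzasz q n (fun t => (t - x) ^ 3) x =
      x / qNat q n ^ 2 + (q - 1) * x ^ 2 / qNat q n := by
  have hq0 : (0:ℝ) < q := by linarith
  have hq1 : q - 1 ≠ 0 := by intro h; linarith [sub_eq_zero.mp h]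
  have hN : 0 < qNat q n := qNat_pos hq hn
  have hT := summable_main hq (N := qNat q n) (x := x) hN hx
  have hrow : ∀ k : ℕ, Summable (fun c : ℕ =>
      ((qNat q k / qNat q n - x)^3 * ((q ^ (k*(k-1)/2))⁻¹ *
        (qNat q n ^ k * x ^ k / qFactorial q k)))
      * ((-(qNat q n) * q ^ (-(k:ℤ)) * x) ^ c / qFactorial q c)) := fun k =>
    (summable_qExpSeries hq _).mul_left _
  have h1 : qSzasz q n (fun t => (t - x)^3) x
      = ∑' (k : ℕ) (c : ℕ), ((qNat q k / qNat q n - x)^3 * ((q ^ (k*(k-1)/2))⁻¹ *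
          (qNat q n ^ k * x ^ k / qFactorial q k)))
        * ((-(qNat q n) * q ^ (-(k:ℤ)) * x) ^ c / qFactorial q c) := by
    rw [qSzasz]
    refine tsum_congr fun k => ?_
    symm
    rw [tsum_mul_left]
    simp only [qSzaszBasis, qExp]
    ring
  have h1b : (∑' (k : ℕ) (c : ℕ), ((qNat q k / qNat q n - x)^3 * ((q ^ (k*(k-1)/2))⁻¹ *
          (qNat q n ^ k * x ^ k / qFactorial q k)))
        * ((-(qNat q n) * q ^ (-(k:ℤ)) * x) ^ c / qFactorial q c))
      = ∑' p : ℕ × ℕ, ((qNat q p.1 / qNat q n - x)^3 * ((q ^ (p.1*(p.1-1)/2))⁻¹ *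
          (qNat q n ^ p.1 * x ^ p.1 / qFactorial q p.1)))
        * ((-(qNat q n) * q ^ (-(p.1:ℤ)) * x) ^ p.2 / qFactorial q p.2) :=
    (Summable.tsum_prod' hT hrow).symm
  rw [h1, h1b]
  have hD : ∀ m : ℕ, (∑ kl ∈ Finset.HasAntidiagonal.antidiagonal m,
        ((qNat q kl.1 / qNat q n - x)^3 * ((q ^ (kl.1*(kl.1-1)/2))⁻¹ *
          (qNat q n ^ kl.1 * x ^ kl.1 / qFactorial q kl.1)))
        * ((-(qNat q n) * q ^ (-(kl.1:ℤ)) * x) ^ kl.2 / qFactorial q kl.2))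
      = ((-1)^m * (qNat q n*x)^m / ((q-1)*qNat q n)^3) *
        (Ssum q 3 m - 3*(1+(q-1)*qNat q n*x) * Ssum q 2 m
          + 3*(1+(q-1)*qNat q n*x)^2 * Ssum q 1 m
          - (1+(q-1)*qNat q n*x)^3 * Ssum q 0 m) := by
    intro m
    rw [Finset.Nat.sum_antidiagonal_eq_sum_range_succ_mk]
    rw [Finset.sum_congr rfl (fun k hk =>
      T_term hq hN m k (by rw [Finset.mem_range] at hk; omega))]
    rw [← Finset.mul_sum]
    congr 1
    simp only [Ssum]
    rw [Finset.mul_sum, Finset.mul_sum, Finset.mul_sum]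
    rw [← Finset.sum_sub_distrib, ← Finset.sum_add_distrib, ← Finset.sum_sub_distrib]
  have hzero : ∀ m ∉ Finset.range 4, (∑ kl ∈ Finset.HasAntidiagonal.antidiagonal m,
        ((qNat q kl.1 / qNat q n - x)^3 * ((q ^ (kl.1*(kl.1-1)/2))⁻¹ *
          (qNat q n ^ kl.1 * x ^ kl.1 / qFactorial q kl.1)))
        * ((-(qNat q n) * q ^ (-(kl.1:ℤ)) * x) ^ kl.2 / qFactorial q kl.2)) = 0 := by
    intro m hm
    rw [Finset.mem_range, not_lt] at hm
    rw [hD m, S_vanish hq (by omega), S_vanish hq (by omega), S_vanish hq (by omega),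
      S_vanish hq (by omega)]
    ring
  rw [tsum_antidiag hT, tsum_eq_sum hzero]
  rw [Finset.sum_range_succ, Finset.sum_range_succ, Finset.sum_range_succ,
    Finset.sum_range_one, hD 0, hD 1, hD 2, hD 3]
  -- explicit values
  have hqn1 : qNat q 1 = 1 := by
    rw [qNat, pow_one, div_self hq1]
  have hqn2 : qNat q 2 = q + 1 := by
    rw [qNat]; rw [div_eq_iff hq1]; ring
  have hqn3 : qNat q 3 = q^2 + q + 1 := by
    rw [qNat]; rw [div_eq_iff hq1]; ring
  have hf0 : qFactorial q 0 = 1 := rfl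
  have hf1 : qFactorial q 1 = 1 := by
    show qFactorial q 0 * qNat q 1 = 1
    rw [hf0, hqn1, mul_one]
  have hf2 : qFactorial q 2 = q + 1 := by
    show qFactorial q 1 * qNat q 2 = q + 1
    rw [hf1, hqn2, one_mul]
  have hf3 : qFactorial q 3 = (q + 1) * (q^2 + q + 1) := by
    show qFactorial q 2 * qNat q 3 = (q + 1) * (q^2 + q + 1)
    rw [hf2, hqn3]
  simp only [Ssum, Finset.sum_range_succ, Finset.sum_range_zero]
  norm_num [hf0, hf1, hf2, hf3]
  have hNne : qNat q n ≠ 0 := hN.ne'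
  have hp1 : (q:ℝ) + 1 ≠ 0 := by positivity
  have hp2 : (q:ℝ)^2 + q + 1 ≠ 0 := by positivity
  have hqne : (q:ℝ) ≠ 0 := hq0.ne'
  field_simp
  ring
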